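/- Let p be a prime > 7 and J a multiset over (ZMod p)^3 with |J| = 6p - 3, N^p(J) = 0, and N^{2p}(J) ≡ t (mod p). Then N^{3p}(J) ≡ 3t + 10, N^{4p}(J) ≡ 3t + 15, and N^{5p}(J) ≡ t + 6 (mod p), and at most one of t, 3t+10, 3t+15, t+6 is divisible by p. -/

import Mathlib

open Finset MvPolynomial

lemma key_sum {p : ℕ} [Fact p.Prime] {ι : Type} [Fintype ι] [DecidableEq ι]
    (g : ι → Fin 4 → ZMod p) (h : 4 * (p - 1) < Fintype.card ι) :
    ∑ S : Finset ι, (-1 : ZMod p) ^ S.card * (if ∑ i ∈ S, g i = 0 then 1 else 0) = 0 := by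
  have hp : p.Prime := Fact.out
  have hp1 : 1 ≤ p := hp.one_lt.le
  have hpm1 : p - 1 ≠ 0 := by have := hp.two_le; omega
  set F : MvPolynomial ι (ZMod p) :=
    ∏ c : Fin 4, (1 - (∑ i : ι, MvPolynomial.C (g i c) * (MvPolynomial.X i) ^ (p - 1)) ^ (p - 1))
    with hF
  -- degree bound
  have hdegA : ∀ c : Fin 4,
      (∑ i : ι, MvPolynomial.C (g i c) * (MvPolynomial.X i) ^ (p - 1)).totalDegree ≤ p - 1 := by
    intro c
    refine le_trans (totalDegree_finset_sum _ _) (Finset.sup_le fun i _ => ?_)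
    refine le_trans (totalDegree_mul _ _) ?_
    simp [totalDegree_X_pow]
  have hdeg : F.totalDegree < (Fintype.card (ZMod p) - 1) * Fintype.card ι := by
    rw [ZMod.card]
    have h1 : F.totalDegree ≤ 4 * ((p - 1) * (p - 1)) := by
      refine le_trans (totalDegree_finset_prod _ _) ?_
      have hfac : ∀ c : Fin 4,
          (1 - (∑ i : ι, MvPolynomial.C (g i c) * (MvPolynomial.X i) ^ (p - 1)) ^ (p - 1)).totalDegree
            ≤ (p - 1) * (p - 1) := by
        intro c
        have h2 : ((∑ i : ι, MvPolynomial.C (g i c) * (MvPolynomial.X i) ^ (p - 1)) ^ (p - 1)).totalDegree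
            ≤ (p - 1) * (p - 1) :=
          le_trans (totalDegree_pow _ _) (Nat.mul_le_mul_left _ (hdegA c))
        refine le_trans (totalDegree_sub _ _) (max_le (by simp) h2)
      refine le_trans (Finset.sum_le_sum (fun c _ => hfac c)) ?_
      simp [Finset.sum_const]
    calc F.totalDegree ≤ 4 * ((p - 1) * (p - 1)) := h1
      _ = (p - 1) * (4 * (p - 1)) := by ring
      _ < (p - 1) * Fintype.card ι := mul_lt_mul_of_pos_left h (by have := hp.two_le; omega)
  have h0 := MvPolynomial.sum_eval_eq_zero F hdeg
  -- evaluate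
  have heval : ∀ x : ι → ZMod p,
      eval x F = (if ∑ i ∈ univ.filter (fun i => x i ≠ 0), g i = 0 then 1 else 0) := by
    intro x
    have hx : ∀ i, (x i) ^ (p - 1) = if x i ≠ 0 then 1 else 0 := by
      intro i
      by_cases hxi : x i = 0
      · simp [hxi, zero_pow hpm1]
      · simp [hxi, ZMod.pow_card_sub_one_eq_one hxi]
    have hsum : ∀ c : Fin 4, (∑ i : ι, g i c * (x i) ^ (p - 1))
        = ∑ i ∈ univ.filter (fun i => x i ≠ 0), g i c := by
      intro c
      rw [Finset.sum_filter]
      refine Finset.sum_congr rfl fun i _ => ?_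
      rw [hx i]; split <;> simp
    have hFx : eval x F = ∏ c : Fin 4,
        (1 - (∑ i ∈ univ.filter (fun i => x i ≠ 0), g i c) ^ (p - 1)) := by
      rw [hF]
      simp only [map_prod, map_sub, map_one, map_pow, map_sum, map_mul, eval_C, eval_X]
      exact Finset.prod_congr rfl fun c _ => by rw [hsum c]
    rw [hFx]
    by_cases hz : (∑ i ∈ univ.filter (fun i => x i ≠ 0), g i) = 0
    · rw [if_pos hz]
      refine Finset.prod_eq_one fun c _ => ?_
      have : (∑ i ∈ univ.filter (fun i => x i ≠ 0), g i c) = 0 := by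
        have := congrFun hz c
        simpa [Finset.sum_apply] using this
      rw [this, zero_pow hpm1, sub_zero]
    · rw [if_neg hz]
      have : ∃ c, (∑ i ∈ univ.filter (fun i => x i ≠ 0), g i c) ≠ 0 := by
        by_contra hc
        push_neg at hc
        exact hz (funext fun c => by simpa [Finset.sum_apply] using hc c)
      obtain ⟨c, hc⟩ := this
      refine Finset.prod_eq_zero (Finset.mem_univ c) ?_
      rw [ZMod.pow_card_sub_one_eq_one hc, sub_self]
  -- partition by support
  have hpart := Finset.sum_fiberwise_of_maps_to (s := (univ : Finset (ι → ZMod p)))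
    (g := fun x : ι → ZMod p => univ.filter (fun i => x i ≠ 0)) (t := univ)
    (fun x _ => Finset.mem_univ _) (fun x => eval x F)
  rw [← hpart] at h0
  -- fiber card
  have hfiber : ∀ S : Finset ι,
      (univ.filter (fun x : ι → ZMod p => univ.filter (fun i => x i ≠ 0) = S))
        = Fintype.piFinset (fun i => if i ∈ S then (univ \ {0} : Finset (ZMod p)) else {0}) := by
    intro S
    ext x
    simp only [Finset.mem_filter, Finset.mem_univ, true_and, Fintype.mem_piFinset]
    constructor
    · intro hS i
      have hiff : ∀ j, x j ≠ 0 ↔ j ∈ S := by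
        intro j
        rw [← hS]
        simp
      by_cases hi : i ∈ S
      · have hx : x i ≠ 0 := (hiff i).mpr hi
        simp [hi, hx]
      · have hx : x i = 0 := by
          by_contra hne
          exact hi ((hiff i).mp hne)
        simp [hi, hx]
    · intro hall
      ext i
      simp only [Finset.mem_filter, Finset.mem_univ, true_and]
      by_cases hi : i ∈ S
      · have := hall i; rw [if_pos hi] at this; simp at this; simp [hi, this]
      · have := hall i; rw [if_neg hi] at this; simp at this; simp [hi, this]
  have hcard : ∀ S : Finset ι,
      (univ.filter (fun x : ι → ZMod p => univ.filter (fun i => x i ≠ 0) = S)).card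
        = (p - 1) ^ S.card := by
    intro S
    rw [hfiber S, Fintype.card_piFinset]
    have : ∀ i : ι, ((if i ∈ S then (univ \ {0} : Finset (ZMod p)) else {0})).card
        = if i ∈ S then p - 1 else 1 := by
      intro i
      split
      · rw [Finset.card_sdiff_of_subset (by simp)]
        simp [ZMod.card]
      · simp
    simp only [this]
    rw [Finset.prod_ite_mem, Finset.univ_inter, Finset.prod_const]
  have hval : ∀ S : Finset ι, ∀ x ∈ univ.filter
      (fun x : ι → ZMod p => univ.filter (fun i => x i ≠ 0) = S),
      eval x F = (if ∑ i ∈ S, g i = 0 then 1 else 0) := by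
    intro S x hx
    rw [heval x, (Finset.mem_filter.mp hx).2]
  calc ∑ S : Finset ι, (-1 : ZMod p) ^ S.card * (if ∑ i ∈ S, g i = 0 then 1 else 0)
      = ∑ S : Finset ι, ∑ x ∈ univ.filter
          (fun x : ι → ZMod p => univ.filter (fun i => x i ≠ 0) = S), eval x F := by
        refine Finset.sum_congr rfl fun S _ => ?_
        rw [Finset.sum_congr rfl (hval S), Finset.sum_const, hcard S]
        have hneg : (((p - 1 : ℕ)) : ZMod p) = -1 := by
          push_cast [Nat.cast_sub hp1]
          simp
        rw [nsmul_eq_mul]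
        push_cast
        rw [hneg]
    _ = 0 := h0
lemma key_sum_powerset {p : ℕ} [Fact p.Prime] {ι : Type} [DecidableEq ι]
    (g : ι → Fin 4 → ZMod p) (Y : Finset ι) (h : 4 * (p - 1) < Y.card) :
    ∑ S ∈ Y.powerset, (-1 : ZMod p) ^ S.card * (if ∑ i ∈ S, g i = 0 then 1 else 0) = 0 := by
  have hkey := key_sum (ι := {i // i ∈ Y}) (fun i => g i.1) (by rwa [Fintype.card_coe])
  have htrans : ∑ S ∈ Y.powerset, (-1 : ZMod p) ^ S.card * (if ∑ i ∈ S, g i = 0 then 1 else 0)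
      = ∑ S : Finset {i // i ∈ Y}, (-1 : ZMod p) ^ S.card *
          (if ∑ i ∈ S, g i.1 = 0 then 1 else 0) := by
    refine Finset.sum_bij' (s := Y.powerset) (t := (Finset.univ : Finset (Finset {i // i ∈ Y})))
      (i := fun (S : Finset ι) (_ : S ∈ Y.powerset) => S.subtype (· ∈ Y))
      (j := fun (S' : Finset {i // i ∈ Y}) _ => S'.map (Function.Embedding.subtype _))
      ?_ ?_ ?_ ?_ ?_
    · intro S hS
      exact Finset.mem_univ _
    · intro S' _
      rw [Finset.mem_powerset]
      intro i hi
      obtain ⟨a, _, rfl⟩ := Finset.mem_map.mp hi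
      exact a.2
    · intro S hS
      ext i
      simp only [Finset.mem_map, Finset.mem_subtype, Function.Embedding.coe_subtype]
      constructor
      · rintro ⟨a, ha, rfl⟩; exact ha
      · intro hi
        exact ⟨⟨i, Finset.mem_powerset.mp hS hi⟩, hi, rfl⟩
    · intro S' _
      ext a
      simp only [Finset.mem_subtype, Finset.mem_map, Function.Embedding.coe_subtype]
      constructor
      · rintro ⟨b, hb, hba⟩
        cases Subtype.ext hba
        exact hb
      · intro ha; exact ⟨a, ha, rfl⟩
    · intro S hS
      have hcard : (S.subtype (· ∈ Y)).card = S.card := by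
        rw [Finset.card_subtype, Finset.filter_true_of_mem (fun i hi => Finset.mem_powerset.mp hS hi)]
      have hsum : ∑ i ∈ S.subtype (· ∈ Y), g i.1 = ∑ i ∈ S, g i := by
        rw [← Finset.sum_subtype_map_embedding (fun a _ => rfl),
          Finset.subtype_map, Finset.filter_true_of_mem (fun i hi => Finset.mem_powerset.mp hS hi)]
      rw [hcard, hsum]
  rw [htrans]
  exact hkey
lemma card_supersets {ι : Type} [Fintype ι] [DecidableEq ι] (S : Finset ι) (m : ℕ)
    (hS : S.card ≤ m) :
    ((Finset.powersetCard m (Finset.univ : Finset ι)).filter (fun Y => S ⊆ Y)).card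
      = (Fintype.card ι - S.card).choose (m - S.card) := by
  have hbij : ((Finset.powersetCard m (Finset.univ : Finset ι)).filter (fun Y => S ⊆ Y)).card
      = (Finset.powersetCard (m - S.card) (Finset.univ \ S)).card := by
    refine Finset.card_bij' (fun Y _ => Y \ S) (fun Z _ => Z ∪ S) ?_ ?_ ?_ ?_
    · intro Y hY
      obtain ⟨hYm, hSY⟩ := Finset.mem_filter.mp hY
      obtain ⟨hYu, hYc⟩ := Finset.mem_powersetCard.mp hYm
      refine Finset.mem_powersetCard.mpr ⟨?_, ?_⟩
      · exact Finset.sdiff_subset_sdiff hYu (le_refl _)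
      · rw [Finset.card_sdiff_of_subset hSY, hYc]
    · intro Z hZ
      obtain ⟨hZu, hZc⟩ := Finset.mem_powersetCard.mp hZ
      have hdisj : Disjoint Z S := Finset.disjoint_right.mpr
        (fun a haS haZ => (Finset.mem_sdiff.mp (hZu haZ)).2 haS)
      refine Finset.mem_filter.mpr ⟨Finset.mem_powersetCard.mpr ⟨Finset.subset_univ _, ?_⟩,
        Finset.subset_union_right⟩
      rw [Finset.card_union_of_disjoint hdisj, hZc]
      omega
    · intro Y hY
      exact Finset.sdiff_union_of_subset (Finset.mem_filter.mp hY).2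
    · intro Z hZ
      obtain ⟨hZu, _⟩ := Finset.mem_powersetCard.mp hZ
      exact Finset.union_sdiff_cancel_right (Finset.disjoint_right.mpr
        (fun a haS haZ => (Finset.mem_sdiff.mp (hZu haZ)).2 haS))
  rw [hbij, Finset.card_powersetCard, Finset.card_sdiff_of_subset (Finset.subset_univ S),
    Finset.card_univ]

lemma card_supersets_zero {ι : Type} [Fintype ι] [DecidableEq ι] (S : Finset ι) (m : ℕ)
    (hS : m < S.card) :
    ((Finset.powersetCard m (Finset.univ : Finset ι)).filter (fun Y => S ⊆ Y)).card = 0 := by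
  rw [Finset.card_eq_zero]
  refine Finset.filter_eq_empty_iff.mpr ?_
  intro Y hY hSY
  obtain ⟨_, hYc⟩ := Finset.mem_powersetCard.mp hY
  have := Finset.card_le_card hSY
  omega
lemma snoc_sum {p : ℕ} {ι : Type} [DecidableEq ι] (f : ι → Fin 3 → ZMod p) (S : Finset ι) :
    ∑ i ∈ S, (Fin.snoc (f i) 1 : Fin 4 → ZMod p) = Fin.snoc (∑ i ∈ S, f i) (S.card : ZMod p) := by
  funext c
  rw [Finset.sum_apply]
  refine Fin.lastCases ?_ ?_ c
  · simp only [Fin.snoc_last]; simp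
  · intro c'
    simp [Fin.snoc_castSucc, Finset.sum_apply]

lemma snoc_eq_zero_iff {p : ℕ} (a : Fin 3 → ZMod p) (b : ZMod p) :
    (Fin.snoc a b : Fin 4 → ZMod p) = 0 ↔ a = 0 ∧ b = 0 := by
  constructor
  · intro h
    constructor
    · funext c
      have := congrFun h (Fin.castSucc c)
      simpa [Fin.snoc_castSucc] using this
    · have := congrFun h (Fin.last 3)
      simpa only [Fin.snoc_last, Pi.zero_apply] using this
  · rintro ⟨rfl, rfl⟩
    funext c
    refine Fin.lastCases ?_ ?_ c
    · simp only [Fin.snoc_last, Pi.zero_apply]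
    · simp [Fin.snoc_castSucc]

/-- count of zero-sum subsets of given size, Finset version -/
def cnt {p : ℕ} {ι : Type} [Fintype ι] [DecidableEq ι] (f : ι → Fin 3 → ZMod p) (k : ℕ) : ℕ :=
  ((Finset.powersetCard k (Finset.univ : Finset ι)).filter (fun S => ∑ i ∈ S, f i = 0)).card

lemma master {p : ℕ} [Fact p.Prime] {ι : Type} [Fintype ι] [DecidableEq ι]
    (f : ι → Fin 3 → ZMod p) (m : ℕ) (hm : 4 * (p - 1) < m) :
    ∑ k ∈ Finset.range (Fintype.card ι + 1),
      (-1 : ZMod p) ^ k * ((Fintype.card ι - k).choose (m - k) : ZMod p)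
        * (if k ≤ m then 1 else 0) * (if (k : ZMod p) = 0 then 1 else 0)
        * (cnt f k : ZMod p) = 0 := by
  classical
  set n := Fintype.card ι with hn
  set g : ι → Fin 4 → ZMod p := fun i => Fin.snoc (f i) 1 with hg
  set A := Finset.powersetCard m (Finset.univ : Finset ι) with hA
  have h0 : ∑ Y ∈ A, ∑ S ∈ Y.powerset,
      (-1 : ZMod p) ^ S.card * (if ∑ i ∈ S, g i = 0 then 1 else 0) = 0 := by
    refine Finset.sum_eq_zero fun Y hY => ?_
    have hYc : Y.card = m := (Finset.mem_powersetCard.mp hY).2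
    exact key_sum_powerset g Y (by rw [hYc]; exact hm)
  have hpowerset : ∀ Y : Finset ι, Y.powerset
      = (Finset.univ : Finset ι).powerset.filter (fun S => S ⊆ Y) := by
    intro Y; ext S; simp
  have hswap : ∑ Y ∈ A, ∑ S ∈ Y.powerset,
      (-1 : ZMod p) ^ S.card * (if ∑ i ∈ S, g i = 0 then 1 else 0)
      = ∑ S ∈ (Finset.univ : Finset ι).powerset,
          (A.filter (fun Y => S ⊆ Y)).card
            • ((-1 : ZMod p) ^ S.card * (if ∑ i ∈ S, g i = 0 then 1 else 0)) := by
    calc ∑ Y ∈ A, ∑ S ∈ Y.powerset,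
        (-1 : ZMod p) ^ S.card * (if ∑ i ∈ S, g i = 0 then 1 else 0)
        = ∑ Y ∈ A, ∑ S ∈ (Finset.univ : Finset ι).powerset,
            (if S ⊆ Y then (-1 : ZMod p) ^ S.card * (if ∑ i ∈ S, g i = 0 then 1 else 0) else 0) := by
          refine Finset.sum_congr rfl fun Y _ => ?_
          rw [hpowerset Y, Finset.sum_filter]
      _ = ∑ S ∈ (Finset.univ : Finset ι).powerset, ∑ Y ∈ A,
            (if S ⊆ Y then (-1 : ZMod p) ^ S.card * (if ∑ i ∈ S, g i = 0 then 1 else 0) else 0) :=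
          Finset.sum_comm
      _ = _ := by
          refine Finset.sum_congr rfl fun S _ => ?_
          rw [← Finset.sum_filter, Finset.sum_const]
  have hmaps : ∀ S ∈ (Finset.univ : Finset ι).powerset, S.card ∈ Finset.range (n + 1) := by
    intro S _
    rw [Finset.mem_range, Nat.lt_succ_iff]
    exact Finset.card_le_univ S
  have hfib := Finset.sum_fiberwise_of_maps_to hmaps
    (fun S => (A.filter (fun Y => S ⊆ Y)).card
      • ((-1 : ZMod p) ^ S.card * (if ∑ i ∈ S, g i = 0 then 1 else 0)))
  have hinner : ∀ k ∈ Finset.range (n + 1),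
      ∑ S ∈ (Finset.univ : Finset ι).powerset.filter (fun S => S.card = k),
        (A.filter (fun Y => S ⊆ Y)).card
          • ((-1 : ZMod p) ^ S.card * (if ∑ i ∈ S, g i = 0 then 1 else 0))
      = (-1 : ZMod p) ^ k * ((n - k).choose (m - k) : ZMod p)
          * (if k ≤ m then 1 else 0) * (if (k : ZMod p) = 0 then 1 else 0)
          * (cnt f k : ZMod p) := by
    intro k _
    have hfilter : (Finset.univ : Finset ι).powerset.filter (fun S => S.card = k)
        = Finset.powersetCard k (Finset.univ : Finset ι) := Finset.powersetCard_eq_filter.symm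
    rw [hfilter]
    have hterm : ∀ S ∈ Finset.powersetCard k (Finset.univ : Finset ι),
        (A.filter (fun Y => S ⊆ Y)).card
          • ((-1 : ZMod p) ^ S.card * (if ∑ i ∈ S, g i = 0 then 1 else 0))
        = ((-1 : ZMod p) ^ k * ((n - k).choose (m - k) : ZMod p) * (if k ≤ m then 1 else 0)
            * (if (k : ZMod p) = 0 then 1 else 0))
            * (if ∑ i ∈ S, f i = 0 then 1 else 0) := by
      intro S hS
      obtain ⟨_, hSc⟩ := Finset.mem_powersetCard.mp hS
      have hcount : (A.filter (fun Y => S ⊆ Y)).card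
          = if k ≤ m then (n - k).choose (m - k) else 0 := by
        by_cases hkm : k ≤ m
        · rw [if_pos hkm, hA]
          rw [card_supersets S m (by omega)]
          rw [hSc]
        · rw [if_neg hkm, hA]
          exact card_supersets_zero S m (by omega)
      have hind : (if ∑ i ∈ S, g i = 0 then (1 : ZMod p) else 0)
          = (if ∑ i ∈ S, f i = 0 then 1 else 0) * (if (k : ZMod p) = 0 then 1 else 0) := by
        rw [hg]
        simp only
        rw [snoc_sum f S, hSc]
        by_cases h1 : (∑ i ∈ S, f i) = 0 <;> by_cases h2 : ((k : ℕ) : ZMod p) = 0 <;>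
          simp [snoc_eq_zero_iff, h1, h2]
      rw [hcount, hind, hSc, nsmul_eq_mul]
      push_cast
      split <;> ring
    rw [Finset.sum_congr rfl hterm, ← Finset.mul_sum, Finset.sum_boole]
    simp [cnt, Finset.filter_congr_decidable]
  rw [Finset.sum_congr rfl hinner] at hfib
  rw [hswap] at h0
  rw [hfib]
  exact h0
lemma transfer_aux {p : ℕ} {ι : Type} [DecidableEq ι] (f : ι → Fin 3 → ZMod p)
    (s : Finset ι) (Q : ℕ → (Fin 3 → ZMod p) → Bool) :
    Multiset.card ((s.val.map f).powerset.filter (fun T => Q (Multiset.card T) T.sum = true))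
      = (s.powerset.filter (fun S => Q S.card (∑ i ∈ S, f i) = true)).card := by
  induction s using Finset.induction_on generalizing Q with
  | empty =>
    simp only [Finset.empty_val, Multiset.map_zero, Multiset.powerset_zero, Finset.powerset_empty,
      Multiset.filter_singleton, Finset.filter_singleton, Multiset.card_zero, Multiset.sum_zero,
      Finset.card_empty, Finset.sum_empty]
    by_cases hQ : Q 0 0 = true
    · simp [hQ]
    · simp [hQ]
  | insert a s' ha ih =>
    rw [Finset.insert_val_of_notMem ha, Multiset.map_cons, Multiset.powerset_cons,
      Multiset.filter_add, Multiset.card_add, Multiset.filter_map, Multiset.card_map]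
    have hL2 : Multiset.filter ((fun T => Q (Multiset.card T) T.sum = true) ∘ (f a ::ₘ ·))
        (s'.val.map f).powerset
        = Multiset.filter (fun T => Q (Multiset.card T + 1) (f a + T.sum) = true)
            (s'.val.map f).powerset := by
      refine Multiset.filter_congr fun T _ => ?_
      simp [Multiset.card_cons, Multiset.sum_cons]
    rw [hL2, ih, ih (fun k v => Q (k + 1) (f a + v))]
    rw [Finset.powerset_insert, Finset.filter_union, Finset.card_union_of_disjoint]
    · congr 1
      have himage : (s'.powerset.image (insert a)).filter
          (fun S => Q S.card (∑ i ∈ S, f i) = true)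
          = (s'.powerset.filter (fun S => Q (S.card + 1) (f a + ∑ i ∈ S, f i) = true)).image
              (insert a) := by
        rw [Finset.filter_image]
        congr 1
        refine Finset.filter_congr fun S hS => ?_
        have haS : a ∉ S := fun hmem => ha (Finset.mem_powerset.mp hS hmem)
        rw [Finset.card_insert_of_notMem haS, Finset.sum_insert haS]
      rw [himage, Finset.card_image_of_injOn]
      intro S hS S' hS' hSS'
      simp only [Finset.coe_filter, Set.mem_setOf_eq, Finset.mem_powerset] at hS hS'
      have haS : a ∉ S := fun hmem => ha (hS.1 hmem)
      have haS' : a ∉ S' := fun hmem => ha (hS'.1 hmem)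
      rw [← Finset.erase_insert haS, ← Finset.erase_insert haS', hSS']
    · refine Finset.disjoint_left.mpr ?_
      intro S hS1 hS2
      have h1 : a ∉ S := fun hmem =>
        ha (Finset.mem_powerset.mp (Finset.mem_filter.mp hS1).1 hmem)
      obtain ⟨S'', _, rfl⟩ := Finset.mem_image.mp (Finset.mem_filter.mp hS2).1
      exact h1 (Finset.mem_insert_self a S'')
lemma choose_cast {p : ℕ} [Fact p.Prime] (a b c d : ℕ) (hc : c < p) (hd : d < p) :
    (((c + a * p).choose (d + b * p) : ℕ) : ZMod p)
      = ((a.choose b : ℕ) : ZMod p) * ((c.choose d : ℕ) : ZMod p) := by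
  have hp : 0 < p := (Fact.out : p.Prime).pos
  have h := Choose.choose_modEq_choose_mod_mul_choose_div (p := p) (n := c + a * p) (k := d + b * p)
  have h1 : (c + a * p) % p = c := by rw [Nat.add_mul_mod_self_right, Nat.mod_eq_of_lt hc]
  have h2 : (c + a * p) / p = a := by rw [Nat.add_mul_div_right _ _ hp, Nat.div_eq_of_lt hc, zero_add]
  have h3 : (d + b * p) % p = d := by rw [Nat.add_mul_mod_self_right, Nat.mod_eq_of_lt hd]
  have h4 : (d + b * p) / p = b := by rw [Nat.add_mul_div_right _ _ hp, Nat.div_eq_of_lt hd, zero_add]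
  rw [h1, h2, h3, h4] at h
  have h5 := (ZMod.intCast_eq_intCast_iff _ _ p).mpr h
  push_cast at h5
  rw [h5]
  ring

lemma master6 {p : ℕ} [Fact p.Prime] (hp7 : 7 < p) {ι : Type} [Fintype ι] [DecidableEq ι]
    (f : ι → Fin 3 → ZMod p) (hcard : Fintype.card ι = 6 * p - 3)
    (m : ℕ) (hm4 : 4 * (p - 1) < m) :
    ∑ j ∈ Finset.range 6, (-1 : ZMod p) ^ j
      * (if j * p ≤ m then (((6 * p - 3 - j * p).choose (m - j * p) : ℕ) : ZMod p) else 0)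
      * (cnt f (j * p) : ZMod p) = 0 := by
  have h := master f m hm4
  rw [hcard] at h
  set termF : ℕ → ZMod p := fun k =>
    (-1 : ZMod p) ^ k * ((6 * p - 3 - k).choose (m - k) : ZMod p)
      * (if k ≤ m then 1 else 0) * (if (k : ZMod p) = 0 then 1 else 0)
      * (cnt f k : ZMod p) with htermF
  have hsub : (Finset.range 6).image (· * p) ⊆ Finset.range (6 * p - 3 + 1) := by
    intro k hk
    obtain ⟨j, hj, rfl⟩ := Finset.mem_image.mp hk
    rw [Finset.mem_range] at hj ⊢
    have : j * p ≤ 5 * p := Nat.mul_le_mul_right p (by omega)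
    omega
  have hvanish : ∀ k ∈ Finset.range (6 * p - 3 + 1),
      k ∉ (Finset.range 6).image (· * p) → termF k = 0 := by
    intro k hk hknot
    by_cases hz : ((k : ℕ) : ZMod p) = 0
    · exfalso
      obtain ⟨j, rfl⟩ := (ZMod.natCast_eq_zero_iff k p).mp hz
      refine hknot (Finset.mem_image.mpr ⟨j, ?_, by ring⟩)
      rw [Finset.mem_range] at hk ⊢
      by_contra hj6
      push_neg at hj6
      have : p * 6 ≤ p * j := Nat.mul_le_mul_left p hj6
      omega
    · rw [htermF]
      simp only [if_neg hz]
      ring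
  have h1 : ∑ k ∈ (Finset.range 6).image (· * p), termF k = 0 := by
    rw [Finset.sum_subset hsub hvanish]
    exact h
  have h2 : ∑ j ∈ Finset.range 6, termF (j * p) = 0 := by
    rw [← h1, Finset.sum_image]
    intro a _ b _ hab
    have hp0 : 0 < p := by omega
    exact Nat.eq_of_mul_eq_mul_right hp0 hab
  refine Eq.trans (Finset.sum_congr rfl fun j hj => ?_) h2
  rw [htermF]
  simp only
  have hpow : (-1 : ZMod p) ^ (j * p) = (-1 : ZMod p) ^ j := by
    have hodd : Odd p := (Fact.out : p.Prime).odd_of_ne_two (by omega)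
    rw [pow_mul]
    rcases Nat.even_or_odd j with he | ho
    · simp [he.neg_one_pow]
    · simp [ho.neg_one_pow, hodd.neg_one_pow]
  have hite2 : (if ((j * p : ℕ) : ZMod p) = 0 then (1 : ZMod p) else 0) = 1 := by
    rw [if_pos]
    push_cast
    rw [ZMod.natCast_self]
    ring
  rw [hpow, hite2]
  by_cases hjm : j * p ≤ m
  · rw [if_pos hjm, if_pos hjm]
    ring
  · rw [if_neg hjm, if_neg hjm]
    ring
/-- Number of zero-sum sub-multisets of `J` of cardinality `k`. -/
def N {p : ℕ} (k : ℕ) (J : Multiset (Fin 3 → ZMod p)) : ℕ :=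
  (J.powerset.filter (fun T => Multiset.card T = k ∧ T.sum = 0)).card

lemma N_eq_cnt {p : ℕ} (J : Multiset (Fin 3 → ZMod p)) (k : ℕ) :
    N k J = cnt (fun i : Fin J.toList.length => J.toList.get i) k := by
  classical
  set l := J.toList with hl
  set f : Fin l.length → (Fin 3 → ZMod p) := fun i => l.get i with hf
  have huniv : ((Finset.univ : Finset (Fin l.length)).val.map f) = J := by
    rw [Fin.univ_val_map]
    show ((List.ofFn f : List (Fin 3 → ZMod p)) : Multiset _) = J
    rw [hf]
    rw [List.ofFn_get]
    exact J.coe_toList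
  have htr := transfer_aux f Finset.univ (fun c v => decide (c = k ∧ v = 0))
  rw [huniv] at htr
  have hL : Multiset.card (J.powerset.filter
      (fun T => (decide (Multiset.card T = k ∧ T.sum = 0)) = true))
      = N k J := by
    rw [N]
    congr 1
    refine Multiset.filter_congr fun T _ => ?_
    simp
  have hR : ((Finset.univ : Finset (Fin l.length)).powerset.filter
      (fun S => (decide (S.card = k ∧ ∑ i ∈ S, f i = 0)) = true)).card = cnt f k := by
    rw [cnt, Finset.powersetCard_eq_filter, Finset.filter_filter]
    congr 1
    refine Finset.filter_congr fun S _ => ?_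
    simp
  rw [hL, hR] at htr
  exact htr
theorem stmt_15 (p : ℕ) (hp : p.Prime) (hp7 : 7 < p)
    (J : Multiset (Fin 3 → ZMod p)) (hJ : Multiset.card J = 6 * p - 3)
    (h1 : N p J = 0) (t : ℤ) (h2 : (N (2 * p) J : ℤ) ≡ t [ZMOD p]) :
    ((N (3 * p) J : ℤ) ≡ 3 * t + 10 [ZMOD p] ∧
     (N (4 * p) J : ℤ) ≡ 3 * t + 15 [ZMOD p] ∧
     (N (5 * p) J : ℤ) ≡ t + 6 [ZMOD p]) ∧
    ∀ i j : Fin 4, i ≠ j →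
      ¬((p : ℤ) ∣ ![t, 3 * t + 10, 3 * t + 15, t + 6] i ∧
        (p : ℤ) ∣ ![t, 3 * t + 10, 3 * t + 15, t + 6] j) := by
  haveI : Fact p.Prime := ⟨hp⟩
  constructor
  · -- congruence part
    set f : Fin J.toList.length → (Fin 3 → ZMod p) := fun i => J.toList.get i with hf
    have hcard : Fintype.card (Fin J.toList.length) = 6 * p - 3 := by
      rw [Fintype.card_fin, Multiset.length_toList, hJ]
    have key : ∀ (m : ℕ), 4 * (p - 1) < m → ∀ C : ℕ → ZMod p,
        (∀ j, j < 6 → (-1 : ZMod p) ^ j *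
          (if j * p ≤ m then (((6 * p - 3 - j * p).choose (m - j * p) : ℕ) : ZMod p) else 0)
            = C j) →
        ∑ j ∈ Finset.range 6, C j * ((N (j * p) J : ℕ) : ZMod p) = 0 := by
      intro m hm C hC
      rw [← master6 hp7 f hcard m hm]
      refine Finset.sum_congr rfl fun j hj => ?_
      rw [← hC j (Finset.mem_range.mp hj), N_eq_cnt]
    have hN0 : N 0 J = 1 := by
      rw [N_eq_cnt, cnt]
      rw [Finset.powersetCard_zero, Finset.filter_singleton]
      simp
    have E1 := key (6 * p - 3) (by omega)
      (fun j => if j = 0 then 1 else if j = 1 then -1 else if j = 2 then 1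
        else if j = 3 then -1 else if j = 4 then 1 else -1) ?_
    · have E2 := key (5 * p - 3) (by omega)
        (fun j => if j = 0 then 5 else if j = 1 then -4 else if j = 2 then 3
          else if j = 3 then -2 else if j = 4 then 1 else 0) ?_
      · have E3 := key (4 * p - 3) (by omega)
          (fun j => if j = 0 then 10 else if j = 1 then -6 else if j = 2 then 3
            else if j = 3 then -1 else 0) ?_
        · simp only [Finset.sum_range_succ, Finset.sum_range_zero] at E1 E2 E3
          norm_num at E1 E2 E3
          rw [hN0] at E1 E2 E3
          rw [h1] at E1 E2 E3
          have hb : ((N (2 * p) J : ℕ) : ZMod p) = ((t : ℤ) : ZMod p) := by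
            have h2' := (ZMod.intCast_eq_intCast_iff _ _ p).mpr h2
            push_cast at h2' ⊢
            exact h2'
          push_cast at E1 E2 E3 hb
          refine ⟨?_, ?_, ?_⟩
          · rw [← ZMod.intCast_eq_intCast_iff]
            push_cast
            linear_combination (-1 : ZMod p) * E3 + 3 * hb
          · rw [← ZMod.intCast_eq_intCast_iff]
            push_cast
            linear_combination E2 - 2 * E3 + 3 * hb
          · rw [← ZMod.intCast_eq_intCast_iff]
            push_cast
            linear_combination -E1 + E2 - E3 + hb
        · -- coefficients for m = 4p-3
          intro j hj
          interval_cases j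
          · norm_num
            rw [show 6 * p - 3 = (p - 3) + 5 * p from by omega,
              show 4 * p - 3 = (p - 3) + 3 * p from by omega,
              choose_cast 5 3 (p - 3) (p - 3) (by omega) (by omega), Nat.choose_self,
              show Nat.choose 5 3 = 10 from rfl]
            norm_num
          · rw [if_pos (by omega : 1 * p ≤ 4 * p - 3),
              show 6 * p - 3 - 1 * p = (p - 3) + 4 * p from by omega,
              show 4 * p - 3 - 1 * p = (p - 3) + 2 * p from by omega,
              choose_cast 4 2 (p - 3) (p - 3) (by omega) (by omega), Nat.choose_self,
              show Nat.choose 4 2 = 6 from rfl]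
            norm_num
          · rw [if_pos (by omega : 2 * p ≤ 4 * p - 3),
              show 6 * p - 3 - 2 * p = (p - 3) + 3 * p from by omega,
              show 4 * p - 3 - 2 * p = (p - 3) + 1 * p from by omega,
              choose_cast 3 1 (p - 3) (p - 3) (by omega) (by omega), Nat.choose_self,
              show Nat.choose 3 1 = 3 from rfl]
            norm_num
          · rw [if_pos (by omega : 3 * p ≤ 4 * p - 3),
              show 6 * p - 3 - 3 * p = (p - 3) + 2 * p from by omega,
              show 4 * p - 3 - 3 * p = (p - 3) + 0 * p from by omega,
              choose_cast 2 0 (p - 3) (p - 3) (by omega) (by omega), Nat.choose_self,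
              show Nat.choose 2 0 = 1 from rfl]
            norm_num
          · rw [if_neg (by omega : ¬ 4 * p ≤ 4 * p - 3)]
            norm_num
          · rw [if_neg (by omega : ¬ 5 * p ≤ 4 * p - 3)]
            norm_num
      · -- coefficients for m = 5p-3
        intro j hj
        interval_cases j
        · norm_num
          rw [show 6 * p - 3 = (p - 3) + 5 * p from by omega,
            show 5 * p - 3 = (p - 3) + 4 * p from by omega,
            choose_cast 5 4 (p - 3) (p - 3) (by omega) (by omega), Nat.choose_self,
            show Nat.choose 5 4 = 5 from rfl]
          norm_num
        · rw [if_pos (by omega : 1 * p ≤ 5 * p - 3),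
            show 6 * p - 3 - 1 * p = (p - 3) + 4 * p from by omega,
            show 5 * p - 3 - 1 * p = (p - 3) + 3 * p from by omega,
            choose_cast 4 3 (p - 3) (p - 3) (by omega) (by omega), Nat.choose_self,
            show Nat.choose 4 3 = 4 from rfl]
          norm_num
        · rw [if_pos (by omega : 2 * p ≤ 5 * p - 3),
            show 6 * p - 3 - 2 * p = (p - 3) + 3 * p from by omega,
            show 5 * p - 3 - 2 * p = (p - 3) + 2 * p from by omega,
            choose_cast 3 2 (p - 3) (p - 3) (by omega) (by omega), Nat.choose_self,
            show Nat.choose 3 2 = 3 from rfl]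
          norm_num
        · rw [if_pos (by omega : 3 * p ≤ 5 * p - 3),
            show 6 * p - 3 - 3 * p = (p - 3) + 2 * p from by omega,
            show 5 * p - 3 - 3 * p = (p - 3) + 1 * p from by omega,
            choose_cast 2 1 (p - 3) (p - 3) (by omega) (by omega), Nat.choose_self,
            show Nat.choose 2 1 = 2 from rfl]
          norm_num
        · rw [if_pos (by omega : 4 * p ≤ 5 * p - 3),
            show 6 * p - 3 - 4 * p = (p - 3) + 1 * p from by omega,
            show 5 * p - 3 - 4 * p = (p - 3) + 0 * p from by omega,
            choose_cast 1 0 (p - 3) (p - 3) (by omega) (by omega), Nat.choose_self,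
            show Nat.choose 1 0 = 1 from rfl]
          norm_num
        · rw [if_neg (by omega : ¬ 5 * p ≤ 5 * p - 3)]
          norm_num
    · -- coefficients for m = 6p-3
      intro j hj
      interval_cases j
      · norm_num
      · rw [if_pos (by omega : 1 * p ≤ 6 * p - 3), Nat.choose_self]
        norm_num
      · rw [if_pos (by omega : 2 * p ≤ 6 * p - 3), Nat.choose_self]
        norm_num
      · rw [if_pos (by omega : 3 * p ≤ 6 * p - 3), Nat.choose_self]
        norm_num
      · rw [if_pos (by omega : 4 * p ≤ 6 * p - 3), Nat.choose_self]
        norm_num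
      · rw [if_pos (by omega : 5 * p ≤ 6 * p - 3), Nat.choose_self]
        norm_num
  · -- pairwise divisibility part
    have hsmall : ∀ c : ℕ, 0 < c → c ≤ 15 → c ≠ 11 → c ≠ 13 → ¬ (p : ℤ) ∣ (c : ℤ) := by
      intro c hc0 hc15 hc11 hc13 hdvd
      have hd : (p : ℕ) ∣ c := Int.ofNat_dvd.mp (by exact_mod_cast hdvd)
      have hple : p ≤ 15 := le_trans (Nat.le_of_dvd hc0 hd) hc15
      interval_cases p <;> first
        | omega
        | (revert hp; decide)
    have H3 : ¬ (p : ℤ) ∣ (3 : ℤ) := by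
      have := hsmall 3 (by norm_num) (by norm_num) (by norm_num) (by norm_num)
      exact_mod_cast this
    have H5 : ¬ (p : ℤ) ∣ (5 : ℤ) := by
      have := hsmall 5 (by norm_num) (by norm_num) (by norm_num) (by norm_num)
      exact_mod_cast this
    have H6 : ¬ (p : ℤ) ∣ (6 : ℤ) := by
      have := hsmall 6 (by norm_num) (by norm_num) (by norm_num) (by norm_num)
      exact_mod_cast this
    have H8 : ¬ (p : ℤ) ∣ (8 : ℤ) := by
      have := hsmall 8 (by norm_num) (by norm_num) (by norm_num) (by norm_num)
      exact_mod_cast this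
    have H10 : ¬ (p : ℤ) ∣ (10 : ℤ) := by
      have := hsmall 10 (by norm_num) (by norm_num) (by norm_num) (by norm_num)
      exact_mod_cast this
    have H15 : ¬ (p : ℤ) ∣ (15 : ℤ) := by
      have := hsmall 15 (by norm_num) (by norm_num) (by norm_num) (by norm_num)
      exact_mod_cast this
    intro i j hij
    rintro ⟨d1, d2⟩
    fin_cases i <;> fin_cases j <;> simp at d1 d2 hij ⊢
    -- 12 remaining cases
    · exact H10 (by have h := dvd_sub d2 (d1.mul_left 3); rwa [show 3*t+10 - 3*t = 10 from by ring] at h)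
    · exact H15 (by have h := dvd_sub d2 (d1.mul_left 3); rwa [show 3*t+15 - 3*t = 15 from by ring] at h)
    · exact H6 (by have h := dvd_sub d2 d1; rwa [show t+6 - t = 6 from by ring] at h)
    · exact H10 (by have h := dvd_sub d1 (d2.mul_left 3); rwa [show 3*t+10 - 3*t = 10 from by ring] at h)
    · exact H5 (by have h := dvd_sub d2 d1; rwa [show (3*t+15) - (3*t+10) = 5 from by ring] at h)
    · exact H8 (by have h := dvd_sub (d2.mul_left 3) d1; rwa [show 3*(t+6) - (3*t+10) = 8 from by ring] at h)
    · exact H15 (by have h := dvd_sub d1 (d2.mul_left 3); rwa [show 3*t+15 - 3*t = 15 from by ring] at h)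
    · exact H5 (by have h := dvd_sub d1 d2; rwa [show (3*t+15) - (3*t+10) = 5 from by ring] at h)
    · exact H3 (by have h := dvd_sub (d2.mul_left 3) d1; rwa [show 3*(t+6) - (3*t+15) = 3 from by ring] at h)
    · exact H6 (by have h := dvd_sub d1 d2; rwa [show t+6 - t = 6 from by ring] at h)
    · exact H8 (by have h := dvd_sub (d1.mul_left 3) d2; rwa [show 3*(t+6) - (3*t+10) = 8 from by ring] at h)
    · exact H3 (by have h := dvd_sub (d1.mul_left 3) d2; rwa [show 3*(t+6) - (3*t+15) = 3 from by ring] at h)
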